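/- Let R be an invertible n×n real matrix, G an invertible b×b real matrix, Z an n×b real matrix, X an n×p real matrix, and y an n-vector. Set H = R + ZGZᵀ, assume H, XᵀH⁻¹X, ZᵀR⁻¹Z + G⁻¹, and the mixed-model coefficient matrix C = [[XᵀR⁻¹X, XᵀR⁻¹Z],[ZᵀR⁻¹X, ZᵀR⁻¹Z + G⁻¹]] are invertible, and define P = H⁻¹ − H⁻¹X(XᵀH⁻¹X)⁻¹XᵀH⁻¹. Let (τ̂, ũ) ∈ ℝᵖ × ℝᵇ be the solution of the mixed model equations C(τ̂; ũ) = (XᵀR⁻¹y; ZᵀR⁻¹y), and let e = y − Xτ̂ − Zũ be the fitted residual. Then Py = R⁻¹e. -/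

import Mathlib

open Matrix

theorem stmt_8 {n b p : ℕ} (R : Matrix (Fin n) (Fin n) ℝ) (G : Matrix (Fin b) (Fin b) ℝ)
    (Z : Matrix (Fin n) (Fin b) ℝ) (X : Matrix (Fin n) (Fin p) ℝ) (y : Fin n → ℝ)
    (hR : IsUnit R.det) (hG : IsUnit G.det)
    (H : Matrix (Fin n) (Fin n) ℝ) (hH : H = R + Z * G * Zᵀ)
    (C : Matrix (Fin p ⊕ Fin b) (Fin p ⊕ Fin b) ℝ)
    (hC : C = Matrix.fromBlocks (Xᵀ * R⁻¹ * X) (Xᵀ * R⁻¹ * Z)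
                (Zᵀ * R⁻¹ * X) (Zᵀ * R⁻¹ * Z + G⁻¹))
    (hHinv : IsUnit H.det) (hXHX : IsUnit (Xᵀ * H⁻¹ * X).det)
    (hD : IsUnit (Zᵀ * R⁻¹ * Z + G⁻¹).det) (hCinv : IsUnit C.det)
    (P : Matrix (Fin n) (Fin n) ℝ)
    (hP : P = H⁻¹ - H⁻¹ * X * (Xᵀ * H⁻¹ * X)⁻¹ * Xᵀ * H⁻¹)
    (τ : Fin p → ℝ) (u : Fin b → ℝ)
    (hsol : C *ᵥ Sum.elim τ u = Sum.elim ((Xᵀ * R⁻¹) *ᵥ y) ((Zᵀ * R⁻¹) *ᵥ y))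
    (e : Fin n → ℝ) (he : e = y - X *ᵥ τ - Z *ᵥ u) :
    P *ᵥ y = R⁻¹ *ᵥ e := by
  set S : Matrix (Fin b) (Fin b) ℝ := Zᵀ * R⁻¹ * Z + G⁻¹ with hSdef
  -- Woodbury
  have hW : H⁻¹ = R⁻¹ - R⁻¹ * Z * S⁻¹ * Zᵀ * R⁻¹ := by
    have h1 : G⁻¹ + Zᵀ * R⁻¹ * Z = S := by rw [hSdef, add_comm]
    rw [hH, Matrix.add_mul_mul_inv_eq_sub _ _ _ _
      ((Matrix.isUnit_iff_isUnit_det R).mpr hR)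
      ((Matrix.isUnit_iff_isUnit_det G).mpr hG)
      (by rw [h1]; exact (Matrix.isUnit_iff_isUnit_det S).mpr hD), h1]
  -- extract the two block equations
  rw [hC, Matrix.fromBlocks_mulVec] at hsol
  have eq1 : (Xᵀ * R⁻¹ * X) *ᵥ τ + (Xᵀ * R⁻¹ * Z) *ᵥ u = (Xᵀ * R⁻¹) *ᵥ y :=
    funext fun i => congrFun hsol (Sum.inl i)
  have eq2 : (Zᵀ * R⁻¹ * X) *ᵥ τ + S *ᵥ u = (Zᵀ * R⁻¹) *ᵥ y :=
    funext fun i => congrFun hsol (Sum.inr i)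
  set v : Fin n → ℝ := y - X *ᵥ τ with hv
  have hu : S *ᵥ u = (Zᵀ * R⁻¹) *ᵥ v := by
    rw [hv, Matrix.mulVec_sub, ← eq2, Matrix.mulVec_mulVec]
    abel
  have hu2 : u = S⁻¹ *ᵥ ((Zᵀ * R⁻¹) *ᵥ v) := by
    rw [← hu, Matrix.mulVec_mulVec, Matrix.nonsing_inv_mul S hD, Matrix.one_mulVec]
  -- residual identity
  have hre : R⁻¹ *ᵥ e = H⁻¹ *ᵥ v := by
    rw [he, hW, Matrix.sub_mulVec]
    have : y - X *ᵥ τ - Z *ᵥ u = v - Z *ᵥ u := by rw [hv]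
    rw [this, Matrix.mulVec_sub, hu2]
    simp only [Matrix.mulVec_mulVec, Matrix.sub_mulVec, Matrix.mul_assoc]
  -- orthogonality
  have hXv : (Xᵀ * H⁻¹) *ᵥ v = 0 := by
    rw [hW]
    have expand : Xᵀ * (R⁻¹ - R⁻¹ * Z * S⁻¹ * Zᵀ * R⁻¹)
        = Xᵀ * R⁻¹ - (Xᵀ * R⁻¹ * Z) * (S⁻¹ * (Zᵀ * R⁻¹)) := by
      rw [Matrix.mul_sub]; simp only [Matrix.mul_assoc]
    rw [expand, Matrix.sub_mulVec]
    have eq1' : (Xᵀ * R⁻¹ * Z) *ᵥ u = (Xᵀ * R⁻¹) *ᵥ v := by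
      rw [hv, Matrix.mulVec_sub, ← eq1, Matrix.mulVec_mulVec]
      abel
    have step : ((Xᵀ * R⁻¹ * Z) * (S⁻¹ * (Zᵀ * R⁻¹))) *ᵥ v = (Xᵀ * R⁻¹ * Z) *ᵥ u := by
      rw [hu2]; simp only [Matrix.mulVec_mulVec, Matrix.mul_assoc]
    rw [step, eq1', sub_self]
  -- finish
  have hXy : (Xᵀ * H⁻¹) *ᵥ y = (Xᵀ * H⁻¹ * X) *ᵥ τ := by
    have := hXv
    rw [hv, Matrix.mulVec_sub, sub_eq_zero] at this
    rw [this, Matrix.mulVec_mulVec]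
  rw [hP, Matrix.sub_mulVec, hre, hv, Matrix.mulVec_sub]
  congr 1
  have key : ((Xᵀ * H⁻¹ * X)⁻¹ * (Xᵀ * H⁻¹)) *ᵥ y = τ := by
    rw [← Matrix.mulVec_mulVec, hXy, Matrix.mulVec_mulVec,
      Matrix.nonsing_inv_mul _ hXHX, Matrix.one_mulVec]
  rw [show H⁻¹ * X * (Xᵀ * H⁻¹ * X)⁻¹ * Xᵀ * H⁻¹ = (H⁻¹ * X) * ((Xᵀ * H⁻¹ * X)⁻¹ * (Xᵀ * H⁻¹)) by
    simp only [Matrix.mul_assoc], ← Matrix.mulVec_mulVec, ← Matrix.mulVec_mulVec, key]
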